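/- Let m ≥ 1, X > 0, and let a_0,…,a_{m−1} : [0,X] → ℝ be continuous. Assume that for every x ∈ [0,X] every root λ of the polynomial p(x) = λ^m − a_{m−1}(x)λ^{m−1} − ⋯ − a_0(x) satisfies Re λ < 0. Then there exists χ > 0 such that Re λ < −χ for every x ∈ [0,X] and every root λ of p(x). -/
import Mathlib


/-- Let `m ≥ 1`, `X > 0`, and let `a_0, …, a_{m−1} : [0,X] → ℝ` be continuous.  If for every
`x ∈ [0,X]` every complex root `λ` of the polynomial
`p(x) = λ^m − a_{m−1}(x) λ^{m−1} − ⋯ − a_0(x)` satisfies `Re λ < 0`, then there exists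
`χ > 0` such that `Re λ < −χ` for every `x ∈ [0,X]` and every root `λ` of `p(x)`. -/
theorem roots_re_uniformly_negative (m : ℕ) (hm : 1 ≤ m) (X : ℝ) (hX : 0 < X)
    (a : Fin m → ℝ → ℝ) (ha : ∀ j, ContinuousOn (a j) (Set.Icc 0 X))
    (hroots : ∀ x ∈ Set.Icc (0 : ℝ) X, ∀ lam : ℂ,
      lam ^ m = ∑ j : Fin m, (a j x : ℂ) * lam ^ (j : ℕ) → lam.re < 0) :
    ∃ χ > (0 : ℝ), ∀ x ∈ Set.Icc (0 : ℝ) X, ∀ lam : ℂ,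
      lam ^ m = ∑ j : Fin m, (a j x : ℂ) * lam ^ (j : ℕ) → lam.re < -χ := by
  -- bound on coefficients
  obtain ⟨C, hC⟩ : ∃ C : ℝ, ∀ x ∈ Set.Icc (0:ℝ) X, ∀ j, |a j x| ≤ C := by
    have hcont : ContinuousOn (fun x => fun j : Fin m => a j x) (Set.Icc 0 X) :=
      continuousOn_pi.2 ha
    obtain ⟨C, hC⟩ := (isCompact_Icc).exists_bound_of_continuousOn hcont
    refine ⟨C, fun x hx j => ?_⟩
    have := hC x hx
    have h2 : |a j x| ≤ ‖fun j : Fin m => a j x‖ := by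
      simpa [Real.norm_eq_abs] using norm_le_pi_norm (fun j : Fin m => a j x) j
    linarith
  have hC0 : 0 ≤ C := by
    have := hC 0 (by constructor <;> [rfl; exact le_of_lt hX]) ⟨0, hm⟩
    exact le_trans (abs_nonneg _) this
  set R : ℝ := max 1 (m * C) with hR
  have hR1 : (1:ℝ) ≤ R := le_max_left _ _
  -- root bound
  have hbound : ∀ x ∈ Set.Icc (0:ℝ) X, ∀ lam : ℂ,
      lam ^ m = ∑ j : Fin m, (a j x : ℂ) * lam ^ (j : ℕ) → ‖lam‖ ≤ R := by
    intro x hx lam heq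
    by_contra h
    push_neg at h
    have h1 : (1:ℝ) < ‖lam‖ := lt_of_le_of_lt hR1 h
    have hnorm : ‖lam‖ ^ m ≤ m * C * ‖lam‖ ^ (m - 1) := by
      calc ‖lam‖ ^ m = ‖lam ^ m‖ := by rw [norm_pow]
        _ = ‖∑ j : Fin m, (a j x : ℂ) * lam ^ (j : ℕ)‖ := by rw [heq]
        _ ≤ ∑ j : Fin m, ‖(a j x : ℂ) * lam ^ (j : ℕ)‖ := norm_sum_le _ _
        _ ≤ ∑ j : Fin m, C * ‖lam‖ ^ (m - 1) := by
            apply Finset.sum_le_sum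
            intro j _
            rw [norm_mul, norm_pow, Complex.norm_real, Real.norm_eq_abs]
            apply mul_le_mul (hC x hx j) _ (by positivity) hC0
            exact pow_le_pow_right₀ (le_of_lt h1) (Nat.le_sub_one_of_lt j.2)
        _ = m * C * ‖lam‖ ^ (m - 1) := by
            rw [Finset.sum_const, Finset.card_univ, Fintype.card_fin]; ring
    have hlt : m * C < ‖lam‖ := lt_of_le_of_lt (le_max_right 1 (m*C)) h
    have hpow : ‖lam‖ ^ m = ‖lam‖ * ‖lam‖ ^ (m - 1) := by
      rw [← pow_succ']
      congr 1
      omega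
    have hpos : 0 < ‖lam‖ ^ (m-1) := by positivity
    nlinarith
  -- the compact set of pairs
  set g : ℝ × ℂ → ℂ := fun p => p.2 ^ m - ∑ j : Fin m, (a j p.1 : ℂ) * p.2 ^ (j : ℕ) with hg
  set S : Set (ℝ × ℂ) := (Set.Icc 0 X ×ˢ (Set.univ : Set ℂ)) ∩ g ⁻¹' {0} with hSdef
  have hgcont : ContinuousOn g (Set.Icc 0 X ×ˢ (Set.univ : Set ℂ)) := by
    apply ContinuousOn.sub
    · exact (continuous_snd.pow m).continuousOn
    · apply continuousOn_finset_sum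
      intro j _
      apply ContinuousOn.mul
      · apply Continuous.comp_continuousOn Complex.continuous_ofReal
        exact (ha j).comp continuousOn_fst (fun p hp => hp.1)
      · exact (continuous_snd.pow _).continuousOn
  have hSclosed : IsClosed S :=
    hgcont.preimage_isClosed_of_isClosed
      ((isClosed_Icc).prod isClosed_univ) isClosed_singleton
  have hSsub : S ⊆ (Set.Icc 0 X ×ˢ Metric.closedBall (0:ℂ) R) := by
    rintro ⟨x, lam⟩ ⟨⟨hx, -⟩, hz⟩
    refine ⟨hx, ?_⟩
    simp only [Metric.mem_closedBall, dist_zero_right]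
    apply hbound x hx lam
    have : g (x, lam) = 0 := hz
    simpa [hg, sub_eq_zero] using this
  have hScomp : IsCompact S :=
    ((isCompact_Icc).prod (isCompact_closedBall _ _)).of_isClosed_subset hSclosed hSsub
  rcases S.eq_empty_or_nonempty with hSe | hSne
  · refine ⟨1, one_pos, fun x hx lam heq => ?_⟩
    exfalso
    have : (x, lam) ∈ S := ⟨⟨hx, trivial⟩, by simp [hg, sub_eq_zero, heq]⟩
    rw [hSe] at this; exact this
  · obtain ⟨p₀, hp₀S, hp₀max⟩ := hScomp.exists_isMaxOn hSne
      ((Complex.continuous_re.comp continuous_snd).continuousOn)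
    have hc0 : p₀.2.re < 0 := by
      obtain ⟨⟨hx, -⟩, hz⟩ := hp₀S
      apply hroots p₀.1 hx p₀.2
      have : g p₀ = 0 := hz
      rwa [hg, sub_eq_zero] at this
    refine ⟨-p₀.2.re / 2, by linarith, fun x hx lam heq => ?_⟩
    have hmem : (x, lam) ∈ S := ⟨⟨hx, trivial⟩, by simp [hg, sub_eq_zero, heq]⟩
    have := hp₀max hmem
    simp only [Function.comp] at this
    have hle : lam.re ≤ p₀.2.re := this
    linarith
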